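/- The functions I₁ and I₂^β are first integrals of the Rikitake system: for every interval J ⊆ ℝ and every differentiable curve f : J → ℝ³ with f′(t) = X_β(f(t)) for all t ∈ J, the functions t ↦ I₁(f(t)) and t ↦ I₂^β(f(t)) are constant on J. -/

import Mathlib

open Matrix

/-- Coordinate gradient of `f : ℝⁿ → ℝ` at `x`. -/
noncomputable def grad {n : ℕ} (f : (Fin n → ℝ) → ℝ) (x : Fin n → ℝ) : Fin n → ℝ :=
  fun i => fderiv ℝ f x (Pi.single i 1)

/-- Hessian matrix of `f : ℝⁿ → ℝ` at `x`. -/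
noncomputable def hess {n : ℕ} (f : (Fin n → ℝ) → ℝ) (x : Fin n → ℝ) :
    Matrix (Fin n) (Fin n) ℝ :=
  Matrix.of fun i j => fderiv ℝ (fun y => fderiv ℝ f y (Pi.single j 1)) x (Pi.single i 1)

/-- Jacobian matrix of a map `Φ : ℝⁿ → ℝⁿ` at `x`. -/
noncomputable def jac {n : ℕ} (Φ : (Fin n → ℝ) → (Fin n → ℝ)) (x : Fin n → ℝ) :
    Matrix (Fin n) (Fin n) ℝ :=
  Matrix.of fun i j => fderiv ℝ (fun y => Φ y i) x (Pi.single j 1)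

/-- The Rikitake vector field `X_β(x,y,z) = (yz + βy, xz − βx, −xy)`. -/
noncomputable def Riki (β : ℝ) (p : Fin 3 → ℝ) : Fin 3 → ℝ :=
  ![p 1 * p 2 + β * p 1, p 0 * p 2 - β * p 0, -(p 0 * p 1)]

/-- The first integral `I₁(x,y,z) = ½(x² + y²) + z²` of the Rikitake system. -/
noncomputable def rikiI1 (p : Fin 3 → ℝ) : ℝ :=
  (1 / 2) * ((p 0) ^ 2 + (p 1) ^ 2) + (p 2) ^ 2

/-- The first integral `I₂^β(x,y,z) = ¼(−x² + y²) − βz` of the Rikitake system. -/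
noncomputable def rikiI2 (β : ℝ) (p : Fin 3 → ℝ) : ℝ :=
  (1 / 4) * (-(p 0) ^ 2 + (p 1) ^ 2) - β * p 2

/-- Lyapunov stability of an equilibrium `p` of the vector field `X` on `ℝ³`. -/
def LyapunovStable3 (X : (Fin 3 → ℝ) → (Fin 3 → ℝ)) (p : Fin 3 → ℝ) : Prop :=
  ∀ U : Set (Fin 3 → ℝ), IsOpen U → p ∈ U →
    ∃ V : Set (Fin 3 → ℝ), V ⊆ U ∧ IsOpen V ∧ p ∈ V ∧
      ∀ f : ℝ → (Fin 3 → ℝ), f 0 ∈ V →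
        (∀ t : ℝ, 0 ≤ t → HasDerivWithinAt f (X (f t)) (Set.Ici 0) t) →
        ∀ t : ℝ, 0 ≤ t → f t ∈ U

/-- `I₁` and `I₂^β` are first integrals of the Rikitake system: they are
constant along every solution curve defined on an interval `J ⊆ ℝ`. -/
theorem rikitake_first_integrals (β : ℝ) (hβ : β ≠ 0)
    (J : Set ℝ) (hJ : J.OrdConnected) (f : ℝ → Fin 3 → ℝ)
    (hf : ∀ t ∈ J, HasDerivWithinAt f (Riki β (f t)) J t) :
    ∀ s ∈ J, ∀ t ∈ J, rikiI1 (f s) = rikiI1 (f t) ∧ rikiI2 β (f s) = rikiI2 β (f t) := by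
  have hconv : Convex ℝ J := convex_iff_ordConnected.mpr hJ
  have hcoord : ∀ (i : Fin 3), ∀ t ∈ J,
      HasDerivWithinAt (fun u => f u i) (Riki β (f t) i) J t := by
    intro i t ht
    exact (ContinuousLinearMap.proj (R := ℝ) (φ := fun _ : Fin 3 => ℝ)
      i).hasFDerivAt.comp_hasDerivWithinAt t (hf t ht)
  have key : ∀ g : ℝ → ℝ, (∀ t ∈ J, HasDerivWithinAt g 0 J t) →
      ∀ s ∈ J, ∀ t ∈ J, g s = g t := by
    intro g hg s hs t ht
    have hb := hconv.norm_image_sub_le_of_norm_hasFDerivWithin_le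
      (f' := fun _ => (1 : ℝ →L[ℝ] ℝ).smulRight 0) (C := 0)
      (fun x hx => (hg x hx).hasFDerivWithinAt) (fun x hx => by simp) hs ht
    simp at hb
    linarith
  intro s hs t ht
  refine ⟨key (fun u => rikiI1 (f u)) ?_ s hs t ht, key (fun u => rikiI2 β (f u)) ?_ s hs t ht⟩
  · intro u hu
    have h0 := hcoord 0 u hu
    have h1 := hcoord 1 u hu
    have h2 := hcoord 2 u hu
    have h := (((h0.pow 2).add (h1.pow 2)).const_mul ((1:ℝ)/2)).add (h2.pow 2)
    convert h using 1
    · rfl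
    · rfl
    · rfl
    simp [Riki]; ring
  · intro u hu
    have h0 := hcoord 0 u hu
    have h1 := hcoord 1 u hu
    have h2 := hcoord 2 u hu
    have h := ((((h0.pow 2).neg).add (h1.pow 2)).const_mul ((1:ℝ)/4)).sub (h2.const_mul β)
    convert h using 1
    · rfl
    · rfl
    · rfl
    simp [Riki]; ring
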